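/- Let n ≥ 2 and λ, μ ∈ ℝ with μ = min{λ,μ} < 0. Define F(λ,μ) = n((n+1)/2·λ² + (n-1)λμ + (n-1)²/2·μ²) and G(λ,μ) = (n-1)μ² + λ². Then -μ·F(λ,μ) + G(λ,μ)·(nλ + (n(n-1)/2 - 1)μ) + μ³ ≥ 0. -/
import Mathlib


/-- The key algebraic estimate in the Hamilton–Ivey pinching ODE argument, case `ν = μ`:
with `F` the ODE derivative of `R = nλ + (n(n-1)/2)μ` and `G` the ODE derivative of `μ`,
if `μ = min{λ,μ} < 0` and `n ≥ 2` then
`-μ·F + G·(nλ + (n(n-1)/2 - 1)μ) + μ³ ≥ 0`. -/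
theorem stmt1 (n : ℕ) (hn : 2 ≤ n) (l m : ℝ) (hmin : m = min l m) (hneg : m < 0) :
    0 ≤ -m * ((n : ℝ) * (((n : ℝ) + 1) / 2 * l ^ 2 + ((n : ℝ) - 1) * l * m
          + ((n : ℝ) - 1) ^ 2 / 2 * m ^ 2))
        + (((n : ℝ) - 1) * m ^ 2 + l ^ 2)
          * ((n : ℝ) * l + ((n : ℝ) * ((n : ℝ) - 1) / 2 - 1) * m)
        + m ^ 3 := by
  have hm : m ≤ l := by rw [hmin]; exact min_le_left _ _
  have hn' : (2:ℝ) ≤ (n:ℝ) := by exact_mod_cast hn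
  nlinarith [sq_nonneg l, sq_nonneg m, sq_nonneg (l-m), mul_nonneg (sq_nonneg l) (sub_nonneg.2 hm), mul_pos (neg_pos.2 hneg) (neg_pos.2 hneg), mul_nonneg (mul_nonneg (sq_nonneg m) (neg_pos.2 hneg).le) (sub_nonneg.2 hn'), mul_nonneg (mul_nonneg (sq_nonneg l) (sub_nonneg.2 hm)) (sub_nonneg.2 hn'), mul_nonneg (sq_nonneg l) (neg_pos.2 hneg).le]
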